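/- Let p ≥ 1, N ≥ 1, and 0 ≤ r ≤ p-1. Suppose R(x) = Σ_{l=0}^{N} R_l x^l is a p×p matrix polynomial whose leading coefficient R_N has the block form [[0_{(p-r)×r}, t_N],[0_{r×r}, 0_{r×(p-r)}]] with t_N an invertible upper triangular (p-r)×(p-r) matrix, and whose subleading coefficient R_{N-1} has block form [[R¹_{N-1}, R²_{N-1}],[t_{N-1}, R⁴_{N-1}]] with t_{N-1} an invertible upper triangular r×r matrix. Suppose R̂(x) is another p×p matrix polynomial of the same degree N satisfying the same block conditions, and suppose R̂(x) = R(x)·𝒜(x) for some matrix polynomial 𝒜(x). Then 𝒜(x) is constant in x (degree zero), upper triangular, and invertible. -/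

import Mathlib

open Polynomial Matrix Finset

private lemma vanish {p : ℕ} (v : Fin p → ℂ) (lo hi : ℕ) (hhi : hi ≤ p)
    (T : ℕ → Fin p → ℂ)
    (hT0 : ∀ c, lo ≤ c → c < hi → ∀ k : Fin p, (k : ℕ) < c → T c k = 0)
    (hTd : ∀ c (_ : lo ≤ c) (h2 : c < hi), T c ⟨c, lt_of_lt_of_le h2 hhi⟩ ≠ 0)
    (heq : ∀ c, lo ≤ c → c < hi → ∑ k, T c k * v k = 0)
    (hv : ∀ k : Fin p, hi ≤ (k : ℕ) → v k = 0) :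
    ∀ k : Fin p, lo ≤ (k : ℕ) → v k = 0 := by
  have aux : ∀ d, ∀ k : Fin p, hi - d ≤ (k : ℕ) → lo ≤ (k : ℕ) → v k = 0 := by
    intro d
    induction d with
    | zero => exact fun k hk _ => hv k (by omega)
    | succ d ih =>
      intro k hk hlo
      by_cases h : hi - d ≤ (k : ℕ)
      · exact ih k h hlo
      · push_neg at h
        have hc1 : (k : ℕ) < hi := by omega
        have hsum := heq (k : ℕ) hlo hc1
        have hred : ∑ k', T (k : ℕ) k' * v k' = T (k : ℕ) k * v k := by
          apply Finset.sum_eq_single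
          · intro k' _ hne
            have hne' : (k' : ℕ) ≠ (k : ℕ) := fun hh => hne (Fin.ext hh)
            rcases lt_or_gt_of_ne hne' with hlt | hgt
            · rw [hT0 (k : ℕ) hlo hc1 k' hlt, zero_mul]
            · rw [ih k' (by omega) (by omega), mul_zero]
          · exact fun hcon => absurd (Finset.mem_univ k) hcon
        rw [hred] at hsum
        have hT := hTd (k : ℕ) hlo hc1
        have hkk : (⟨(k : ℕ), lt_of_lt_of_le hc1 hhi⟩ : Fin p) = k := Fin.ext rfl
        rw [hkk] at hT
        exact (mul_eq_zero.mp hsum).resolve_left hT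
  exact fun k hk => aux hi k (by omega) hk

private lemma stepA {p r : ℕ} (hrp : r < p) (RN : Matrix (Fin p) (Fin p) ℂ)
    (v : Fin p → ℂ) (Z : Fin p → ℂ) (lo : ℕ) (hlo : r ≤ lo)
    (hRN0 : ∀ i j : Fin p, ((j : ℕ) < (i : ℕ) + r ∨ p - r ≤ (i : ℕ)) → RN i j = 0)
    (hRNd : ∀ i j : Fin p, (j : ℕ) = (i : ℕ) + r → RN i j ≠ 0)
    (heq : ∀ i : Fin p, ∑ k, RN i k * v k = Z i)
    (hZ : ∀ i : Fin p, lo ≤ (i : ℕ) + r → Z i = 0) :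
    ∀ k : Fin p, lo ≤ (k : ℕ) → v k = 0 := by
  apply vanish v lo p le_rfl
    (fun c k => if h : c < p then RN ⟨c - r, by omega⟩ k else 0)
  · intro c h1 h2 k hk
    rw [dif_pos h2]
    exact hRN0 _ _ (Or.inl (by first | rfl | (simp only []; omega)))
  · intro c h1 h2
    rw [dif_pos h2]
    exact hRNd _ _ (by first | rfl | (simp only []; omega))
  · intro c h1 h2
    simp only [dif_pos h2]
    rw [heq ⟨c - r, by omega⟩]
    exact hZ _ (by first | rfl | (simp only []; omega))
  · intro k hk
    exact absurd k.isLt (by omega)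

private lemma stepB {p r : ℕ} (hrp : r < p) (RN1 : Matrix (Fin p) (Fin p) ℂ)
    (v : Fin p → ℂ) (Z : Fin p → ℂ) (lo : ℕ)
    (hz : ∀ i j : Fin p, (j : ℕ) < r → (j : ℕ) + (p - r) < (i : ℕ) → RN1 i j = 0)
    (hd : ∀ i j : Fin p, (j : ℕ) < r → (j : ℕ) + (p - r) = (i : ℕ) → RN1 i j ≠ 0)
    (heq : ∀ i : Fin p, ∑ k, RN1 i k * v k = Z i)
    (hZ : ∀ i : Fin p, lo + (p - r) ≤ (i : ℕ) → Z i = 0)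
    (hv : ∀ k : Fin p, r ≤ (k : ℕ) → v k = 0) :
    ∀ k : Fin p, lo ≤ (k : ℕ) → v k = 0 := by
  apply vanish v lo r (le_of_lt hrp)
    (fun c k => if h : c < r then RN1 ⟨c + (p - r), by omega⟩ k else 0)
  · intro c h1 h2 k hk
    rw [dif_pos h2]
    exact hz _ _ (by omega) (by first | rfl | (simp only []; omega))
  · intro c h1 h2
    rw [dif_pos h2]
    exact hd _ _ (by first | rfl | (simp only []; omega))
      (by first | rfl | (simp only []; omega))
  · intro c h1 h2
    simp only [dif_pos h2]
    rw [heq ⟨c + (p - r), by omega⟩]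
    exact hZ _ (by first | rfl | (simp only []; omega))
  · exact hv



/-- If `R` and `R̂` are `p×p` matrix polynomials of degree `N` whose leading
coefficients have block form `[[0, t_N],[0,0]]` with `t_N` invertible upper triangular
`(p-r)×(p-r)`, and whose subleading coefficients have lower-left `r×r` block an invertible
upper triangular matrix, and `R̂ = R·𝒜`, then `𝒜` is constant, upper triangular and
invertible. -/
theorem stmt0 (p N r : ℕ) (hp : 1 ≤ p) (hN : 1 ≤ N) (hr : r ≤ p - 1)
    (R Rhat A : Polynomial (Matrix (Fin p) (Fin p) ℂ))
    -- `R` has degree `N`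
    (hRdeg : ∀ l, N < l → R.coeff l = 0)
    -- leading coefficient of `R`: zero outside the upper-right block and below its diagonal
    (hRN0 : ∀ i j : Fin p, ((j : ℕ) < (i : ℕ) + r ∨ p - r ≤ (i : ℕ)) → R.coeff N i j = 0)
    -- the upper-right triangular block `t_N` has nonzero diagonal (hence invertible)
    (hRNd : ∀ i j : Fin p, (j : ℕ) = (i : ℕ) + r → R.coeff N i j ≠ 0)
    -- subleading coefficient of `R`: lower-left block `t_{N-1}` is upper triangular
    (hRN1z : ∀ i j : Fin p, (j : ℕ) < r → (j : ℕ) + (p - r) < (i : ℕ) →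
      R.coeff (N - 1) i j = 0)
    -- with nonzero diagonal (hence invertible)
    (hRN1d : ∀ i j : Fin p, (j : ℕ) < r → (j : ℕ) + (p - r) = (i : ℕ) →
      R.coeff (N - 1) i j ≠ 0)
    -- `R̂` has the same degree and satisfies the same block conditions
    (hRhdeg : ∀ l, N < l → Rhat.coeff l = 0)
    (hRhN0 : ∀ i j : Fin p, ((j : ℕ) < (i : ℕ) + r ∨ p - r ≤ (i : ℕ)) → Rhat.coeff N i j = 0)
    (hRhNd : ∀ i j : Fin p, (j : ℕ) = (i : ℕ) + r → Rhat.coeff N i j ≠ 0)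
    (hRhN1z : ∀ i j : Fin p, (j : ℕ) < r → (j : ℕ) + (p - r) < (i : ℕ) →
      Rhat.coeff (N - 1) i j = 0)
    (hRhN1d : ∀ i j : Fin p, (j : ℕ) < r → (j : ℕ) + (p - r) = (i : ℕ) →
      Rhat.coeff (N - 1) i j ≠ 0)
    -- the factorization `R̂(x) = R(x)·𝒜(x)`
    (hfact : Rhat = R * A) :
    A.natDegree = 0 ∧ (∀ i j : Fin p, (j : ℕ) < (i : ℕ) → A.coeff 0 i j = 0) ∧
      IsUnit (A.coeff 0) := by
  have hrp : r < p := by omega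
  -- A ≠ 0
  have hA0 : A ≠ 0 := by
    intro h
    rw [h, mul_zero] at hfact
    exact hRhNd ⟨0, by omega⟩ ⟨r, hrp⟩ (show r = 0 + r by omega) (by rw [hfact]; rfl)
  -- natDegree A = 0
  have hdeg0 : A.natDegree = 0 := by
    by_contra hdne
    obtain ⟨d, hd⟩ : ∃ d, A.natDegree = d := ⟨A.natDegree, rfl⟩
    have hd1 : 1 ≤ d := by omega
    -- E1 : R_N * A_d = 0
    have E1 : R.coeff N * A.coeff d = 0 := by
      have h2 : (R * A).coeff (N + d) = R.coeff N * A.coeff d := by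
        rw [Polynomial.coeff_mul]
        apply Finset.sum_eq_single ((N, d) : ℕ × ℕ)
        · rintro ⟨a, b⟩ hab hne
          rw [Finset.HasAntidiagonal.mem_antidiagonal] at hab
          by_cases haN : N < a
          · rw [hRdeg a haN, Matrix.zero_mul]
          · have hor : ¬(a = N ∧ b = d) := by
              intro hc
              exact hne (by rw [hc.1, hc.2])
            have hbd : A.coeff b = 0 :=
              Polynomial.coeff_eq_zero_of_natDegree_lt (by omega)
            rw [hbd, Matrix.mul_zero]
        · intro h
          exact absurd ((Finset.HasAntidiagonal.mem_antidiagonal (n := N + d) (a := (N, d))).mpr rfl) h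
      rw [← hfact] at h2
      rw [← h2]
      exact hRhdeg _ (by omega)
    -- E2 : rows ≥ p - r of R_{N-1} * A_d vanish
    have E2 : ∀ i j : Fin p, p - r ≤ (i : ℕ) →
        (R.coeff (N - 1) * A.coeff d) i j = 0 := by
      intro i j hi
      have h2 : ((R * A).coeff (N + d - 1)) i j = (R.coeff (N - 1) * A.coeff d) i j := by
        rw [Polynomial.coeff_mul, Matrix.sum_apply]
        apply Finset.sum_eq_single ((N - 1, d) : ℕ × ℕ)
        · rintro ⟨a, b⟩ hab hne
          rw [Finset.HasAntidiagonal.mem_antidiagonal] at hab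
          by_cases haN : N < a
          · rw [hRdeg a haN, Matrix.zero_mul, Matrix.zero_apply]
          · by_cases haN' : a = N
            · subst haN'
              rw [Matrix.mul_apply]
              apply Finset.sum_eq_zero
              intro k _
              rw [hRN0 i k (Or.inr hi), zero_mul]
            · have hor : ¬(a = N - 1 ∧ b = d) := by
                intro hc
                exact hne (by rw [hc.1, hc.2])
              have hbd : A.coeff b = 0 :=
                Polynomial.coeff_eq_zero_of_natDegree_lt (by omega)
              rw [hbd, Matrix.mul_zero, Matrix.zero_apply]
        · intro h
          exact absurd ((Finset.HasAntidiagonal.mem_antidiagonal (n := N + d - 1)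
            (a := (N - 1, d))).mpr (by omega)) h
      rw [← hfact] at h2
      rw [← h2]
      rcases (show N + d - 1 = N ∨ N < N + d - 1 by omega) with h | h
      · rw [h]
        exact hRhN0 i j (Or.inr hi)
      · rw [hRhdeg _ h]
        rfl
    -- conclude A_d = 0
    have hAd : A.coeff d = 0 := by
      ext i j
      have stepa : ∀ k : Fin p, r ≤ (k : ℕ) → A.coeff d k j = 0 := by
        apply stepA hrp (R.coeff N) _ (fun _ => 0) r le_rfl hRN0 hRNd
        · intro i'
          rw [← Matrix.mul_apply, E1]
          rfl
        · intro _ _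
          rfl
      have stepb := stepB hrp (R.coeff (N - 1)) (fun k => A.coeff d k j)
        (fun i' => (R.coeff (N - 1) * A.coeff d) i' j) 0 hRN1z hRN1d
        (fun i' => (Matrix.mul_apply).symm)
        (fun i' hi' => E2 i' j (by omega)) stepa
      simpa using stepb i (by omega)
    exact Polynomial.leadingCoeff_ne_zero.mpr hA0 (by rw [Polynomial.leadingCoeff, hd]; exact hAd)
  -- coefficient relations for the constant A₀
  have hAC : A = Polynomial.C (A.coeff 0) := Polynomial.eq_C_of_natDegree_eq_zero hdeg0
  have EN : Rhat.coeff N = R.coeff N * A.coeff 0 := by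
    conv_lhs => rw [hfact, hAC]
    rw [Polynomial.coeff_mul_C]
  have EN1 : Rhat.coeff (N - 1) = R.coeff (N - 1) * A.coeff 0 := by
    conv_lhs => rw [hfact, hAC]
    rw [Polynomial.coeff_mul_C]
  have heqN : ∀ j i : Fin p, ∑ k, R.coeff N i k * A.coeff 0 k j = Rhat.coeff N i j := by
    intro j i
    rw [EN, Matrix.mul_apply]
  have heqN1 : ∀ j i : Fin p,
      ∑ k, R.coeff (N - 1) i k * A.coeff 0 k j = Rhat.coeff (N - 1) i j := by
    intro j i
    rw [EN1, Matrix.mul_apply]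
  -- upper triangularity
  have tri : ∀ i j : Fin p, (j : ℕ) < (i : ℕ) → A.coeff 0 i j = 0 := by
    intro i j hij
    have stepa : ∀ k : Fin p, max r ((j : ℕ) + 1) ≤ (k : ℕ) → A.coeff 0 k j = 0 := by
      apply stepA hrp (R.coeff N) _ (fun i' => Rhat.coeff N i' j) _ (le_max_left _ _)
        hRN0 hRNd (heqN j)
      intro i' hi'
      exact hRhN0 i' j (Or.inl (by omega))
    by_cases hjr : (j : ℕ) < r
    · have stepb := stepB hrp (R.coeff (N - 1)) (fun k => A.coeff 0 k j)
        (fun i' => Rhat.coeff (N - 1) i' j) ((j : ℕ) + 1) hRN1z hRN1d (heqN1 j)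
        (fun i' hi' => hRhN1z i' j hjr (by omega))
        (fun k hk => stepa k (by omega))
      exact stepb i (by omega)
    · exact stepa i (by omega)
  -- nonzero diagonal
  have hdiag : ∀ j : Fin p, A.coeff 0 j j ≠ 0 := by
    intro j
    by_cases hjr : (j : ℕ) < r
    · set i0 : Fin p := ⟨(j : ℕ) + (p - r), by omega⟩ with hi0
      have hrhs : Rhat.coeff (N - 1) i0 j ≠ 0 := hRhN1d i0 j hjr rfl
      have hred : ∑ k, R.coeff (N - 1) i0 k * A.coeff 0 k j
          = R.coeff (N - 1) i0 j * A.coeff 0 j j := by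
        apply Finset.sum_eq_single
        · intro k _ hne
          have hne' : (k : ℕ) ≠ (j : ℕ) := fun hh => hne (Fin.ext hh)
          rcases lt_or_gt_of_ne hne' with hlt | hgt
          · rw [hRN1z i0 k (by omega) (by simp only [hi0]; omega), zero_mul]
          · rw [tri k j hgt, mul_zero]
        · exact fun hcon => absurd (Finset.mem_univ j) hcon
      have := heqN1 j i0
      rw [hred] at this
      intro h0
      rw [h0, mul_zero] at this
      exact hrhs this.symm
    · set i0 : Fin p := ⟨(j : ℕ) - r, by omega⟩ with hi0
      have hrhs : Rhat.coeff N i0 j ≠ 0 := hRhNd i0 j (by simp only [hi0]; omega)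
      have hred : ∑ k, R.coeff N i0 k * A.coeff 0 k j
          = R.coeff N i0 j * A.coeff 0 j j := by
        apply Finset.sum_eq_single
        · intro k _ hne
          have hne' : (k : ℕ) ≠ (j : ℕ) := fun hh => hne (Fin.ext hh)
          rcases lt_or_gt_of_ne hne' with hlt | hgt
          · rw [hRN0 i0 k (Or.inl (by simp only [hi0]; omega)), zero_mul]
          · rw [tri k j hgt, mul_zero]
        · exact fun hcon => absurd (Finset.mem_univ j) hcon
      have := heqN j i0
      rw [hred] at this
      intro h0
      rw [h0, mul_zero] at this
      exact hrhs this.symm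
  refine ⟨hdeg0, tri, ?_⟩
  -- invertibility
  have hbt : (A.coeff 0).BlockTriangular id := by
    intro i j hij
    exact tri i j hij
  rw [Matrix.isUnit_iff_isUnit_det, Matrix.det_of_upperTriangular hbt]
  rw [isUnit_iff_ne_zero]
  exact Finset.prod_ne_zero_iff.mpr fun i _ => hdiag i
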